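/- Let A be a weighted geometric mean closed Archimedean Φ-algebra. Then for every a ∈ A⁺ and every n ∈ ℕ, n ≥ 1, there exists a unique b ∈ A⁺ with bⁿ = a (denoted a^{1/n}). Consequently a^q exists in A⁺ for every positive rational q. -/

import Mathlib

/-- The set whose infimum (when it exists) is the weighted geometric mean
`△ₖ₌₁ⁿ (fₖ, rₖ) = inf { Σₖ rₖ·θₖ·|fₖ| : θₖ ∈ (0,∞), ∏ₖ θₖ^{rₖ} = 1 }`. -/
def wSet {E : Type*} [AddCommGroup E] [Lattice E] [Module ℝ E]
    (n : ℕ) (f : Fin n → E) (r : Fin n → ℝ) : Set E :=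
  {x | ∃ θ : Fin n → ℝ, (∀ k, 0 < θ k) ∧ (∏ k, θ k ^ r k) = 1 ∧
      x = ∑ k, (r k * θ k) • |f k|}

set_option linter.unusedSectionVars false
set_option linter.unusedVariables false
set_option maxHeartbeats 1000000

namespace Stmt11

lemma poly_amgm (m : ℕ) {u v : ℝ} (hu : 0 ≤ u) (hv : 0 ≤ v) :
    ((m : ℝ) + 1) * u * v ^ m ≤ u ^ (m + 1) + (m : ℝ) * v ^ (m + 1) := by
  have key : ∀ i : ℕ, 0 ≤ (u - v) * (u ^ i - v ^ i) := by
    intro i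
    rcases le_total v u with h | h
    · exact mul_nonneg (by linarith) (sub_nonneg.2 (pow_le_pow_left₀ hv h i))
    · have heq : (u - v) * (u ^ i - v ^ i) = (v - u) * (v ^ i - u ^ i) := by ring
      rw [heq]
      exact mul_nonneg (by linarith) (sub_nonneg.2 (pow_le_pow_left₀ hu h i))
  have hsum : 0 ≤ ∑ i ∈ Finset.range (m + 1), v ^ (m - i) * ((u - v) * (u ^ i - v ^ i)) :=
    Finset.sum_nonneg fun i _ => mul_nonneg (pow_nonneg hv _) (key i)
  have hid : ∑ i ∈ Finset.range (m + 1), v ^ (m - i) * ((u - v) * (u ^ i - v ^ i))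
      = (u ^ (m + 1) + (m : ℝ) * v ^ (m + 1)) - ((m : ℝ) + 1) * u * v ^ m := by
    have h1 : ∀ i ∈ Finset.range (m + 1), v ^ (m - i) * ((u - v) * (u ^ i - v ^ i))
        = u ^ i * v ^ (m - i) * (u - v) - v ^ m * (u - v) := by
      intro i hi
      have hvv : v ^ (m - i) * v ^ i = v ^ m := by
        rw [← pow_add]
        congr 1
        have := Finset.mem_range.1 hi
        omega
      calc v ^ (m - i) * ((u - v) * (u ^ i - v ^ i))
          = u ^ i * v ^ (m - i) * (u - v) - (v ^ (m - i) * v ^ i) * (u - v) := by ring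
        _ = u ^ i * v ^ (m - i) * (u - v) - v ^ m * (u - v) := by rw [hvv]
    rw [Finset.sum_congr rfl h1, Finset.sum_sub_distrib, ← Finset.sum_mul]
    have hg : (∑ i ∈ Finset.range (m + 1), u ^ i * v ^ (m - i)) * (u - v)
        = u ^ (m + 1) - v ^ (m + 1) := by
      have := geom_sum₂_mul u v (m + 1)
      simpa using this
    rw [hg, Finset.sum_const, Finset.card_range, nsmul_eq_mul]
    push_cast
    ring
  linarith [hid ▸ hsum]

lemma amgm_real (m : ℕ) {u v : ℝ} (hu : 0 < u) (hv : 0 < v) :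
    (u ^ m)⁻¹ ≤ 1 / (((m : ℝ) + 1) * v ^ m) + ((m : ℝ) / ((m : ℝ) + 1)) * v * (u ^ (m + 1))⁻¹ := by
  have key := poly_amgm m hu.le hv.le
  rw [← sub_nonneg]
  have hm1 : ((m : ℝ) + 1) ≠ 0 := by positivity
  have hun : u ≠ 0 := hu.ne'
  have hvn : v ≠ 0 := hv.ne'
  have hrw : 1 / (((m : ℝ) + 1) * v ^ m) + ((m : ℝ) / ((m : ℝ) + 1)) * v * (u ^ (m + 1))⁻¹ - (u ^ m)⁻¹
      = (u ^ (m + 1) + (m : ℝ) * v ^ (m + 1) - ((m : ℝ) + 1) * u * v ^ m)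
        / (((m : ℝ) + 1) * v ^ m * u ^ (m + 1)) := by
    field_simp
    ring
  rw [hrw]
  exact div_nonneg (by linarith) (by positivity)

lemma pow_diff_le (N : ℕ) {s t T : ℝ} (hs : 0 ≤ s) (hst : s ≤ t) (htT : t ≤ T) :
    t ^ N - s ^ N ≤ (N : ℝ) * T ^ (N - 1) * (t - s) := by
  have ht' : 0 ≤ t := hs.trans hst
  have hT' : 0 ≤ T := ht'.trans htT
  have hgeom : (∑ i ∈ Finset.range N, t ^ i * s ^ (N - 1 - i)) * (t - s) = t ^ N - s ^ N :=
    geom_sum₂_mul t s N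
  have hbound : (∑ i ∈ Finset.range N, t ^ i * s ^ (N - 1 - i)) ≤ (N : ℝ) * T ^ (N - 1) := by
    calc (∑ i ∈ Finset.range N, t ^ i * s ^ (N - 1 - i))
        ≤ ∑ _i ∈ Finset.range N, T ^ (N - 1) := by
          refine Finset.sum_le_sum fun i hi => ?_
          have hiN : i < N := Finset.mem_range.1 hi
          calc t ^ i * s ^ (N - 1 - i) ≤ T ^ i * T ^ (N - 1 - i) :=
                mul_le_mul (pow_le_pow_left₀ ht' htT i)
                  (pow_le_pow_left₀ hs (hst.trans htT) _) (pow_nonneg hs _) (pow_nonneg hT' i)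
            _ = T ^ (N - 1) := by rw [← pow_add]; congr 1; omega
      _ = (N : ℝ) * T ^ (N - 1) := by rw [Finset.sum_const, Finset.card_range, nsmul_eq_mul]
  calc t ^ N - s ^ N = (∑ i ∈ Finset.range N, t ^ i * s ^ (N - 1 - i)) * (t - s) := hgeom.symm
    _ ≤ (N : ℝ) * T ^ (N - 1) * (t - s) := mul_le_mul_of_nonneg_right hbound (by linarith)



variable {A : Type*} [CommRing A] [Lattice A]
    [CovariantClass A A (· + ·) (· ≤ ·)]
    [Algebra ℝ A] [PosSMulMono ℝ A]

lemma coeff_mono {s t : ℝ} (x : A) (hst : s ≤ t) (hx : 0 ≤ x) : s • x ≤ t • x := by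
  have h : 0 ≤ (t - s) • x := smul_nonneg (by linarith) hx
  rw [sub_smul, sub_nonneg] at h
  exact h

lemma smul_inf_eq {c : ℝ} (hc : 0 < c) (x y : A) : c • (x ⊓ y) = c • x ⊓ c • y := by
  refine le_antisymm (le_inf (smul_le_smul_of_nonneg_left inf_le_left hc.le)
    (smul_le_smul_of_nonneg_left inf_le_right hc.le)) ?_
  have h : c⁻¹ • (c • x ⊓ c • y) ≤ x ⊓ y := by
    refine le_inf ?_ ?_
    · have := smul_le_smul_of_nonneg_left (inf_le_left (a := c • x) (b := c • y)) (inv_nonneg.2 hc.le)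
      rwa [smul_smul, inv_mul_cancel₀ hc.ne', one_smul] at this
    · have := smul_le_smul_of_nonneg_left (inf_le_right (a := c • x) (b := c • y)) (inv_nonneg.2 hc.le)
      rwa [smul_smul, inv_mul_cancel₀ hc.ne', one_smul] at this
  calc c • x ⊓ c • y = c • (c⁻¹ • (c • x ⊓ c • y)) := by
        rw [smul_smul, mul_inv_cancel₀ hc.ne', one_smul]
    _ ≤ c • (x ⊓ y) := smul_le_smul_of_nonneg_left h hc.le

lemma smul_sup_eq {c : ℝ} (hc : 0 < c) (x y : A) : c • (x ⊔ y) = c • x ⊔ c • y := by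
  refine le_antisymm ?_ (sup_le (smul_le_smul_of_nonneg_left le_sup_left hc.le)
    (smul_le_smul_of_nonneg_left le_sup_right hc.le))
  have h : x ⊔ y ≤ c⁻¹ • (c • x ⊔ c • y) := by
    refine sup_le ?_ ?_
    · have := smul_le_smul_of_nonneg_left (le_sup_left (a := c • x) (b := c • y)) (inv_nonneg.2 hc.le)
      rwa [smul_smul, inv_mul_cancel₀ hc.ne', one_smul] at this
    · have := smul_le_smul_of_nonneg_left (le_sup_right (a := c • x) (b := c • y)) (inv_nonneg.2 hc.le)
      rwa [smul_smul, inv_mul_cancel₀ hc.ne', one_smul] at this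
  calc c • (x ⊔ y) ≤ c • (c⁻¹ • (c • x ⊔ c • y)) := smul_le_smul_of_nonneg_left h hc.le
    _ = c • x ⊔ c • y := by rw [smul_smul, mul_inv_cancel₀ hc.ne', one_smul]

lemma smul_posPart_eq {c : ℝ} (hc : 0 < c) (x : A) : (c • x)⁺ = c • x⁺ := by
  rw [posPart_def, posPart_def, smul_sup_eq hc, smul_zero]

lemma inf_zero_smul_left {x y : A} (h : x ⊓ y = 0) {c : ℝ} (hc : 0 < c) : (c • x) ⊓ y = 0 := by
  have hx : 0 ≤ x := by rw [← h]; exact inf_le_left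
  have hy : 0 ≤ y := by rw [← h]; exact inf_le_right
  rcases le_total c 1 with h1 | h1
  · refine le_antisymm ?_ (le_inf (smul_nonneg hc.le hx) hy)
    calc (c • x) ⊓ y ≤ x ⊓ y := by
          refine inf_le_inf_right y ?_
          simpa using coeff_mono x h1 hx
      _ = 0 := h
  · refine le_antisymm ?_ (le_inf (smul_nonneg hc.le hx) hy)
    calc (c • x) ⊓ y ≤ (c • x) ⊓ (c • y) := by
          refine inf_le_inf_left _ ?_
          simpa using coeff_mono y h1 hy
      _ = c • (x ⊓ y) := (smul_inf_eq hc _ _).symm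
      _ = 0 := by rw [h, smul_zero]

lemma inf_zero_smul_right {x y : A} (h : x ⊓ y = 0) {c : ℝ} (hc : 0 < c) : x ⊓ (c • y) = 0 := by
  rw [inf_comm] at h ⊢
  exact inf_zero_smul_left h hc

lemma inf_add_le₃ {x y z : A} (hx : 0 ≤ x) (hy : 0 ≤ y) (hz : 0 ≤ z) :
    x ⊓ (y + z) ≤ x ⊓ y + x ⊓ z := by
  have h1 : x ⊓ y + x ⊓ z = (x + x ⊓ z) ⊓ (y + x ⊓ z) := inf_add _ _ _
  have h2 : y + x ⊓ z = (y + x) ⊓ (y + z) := add_inf _ _ _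
  rw [h1, h2]
  refine le_inf ?_ (le_inf ?_ ?_)
  · exact le_trans inf_le_left (le_add_of_nonneg_right (le_inf hx hz))
  · exact le_trans inf_le_left (le_add_of_nonneg_left hy)
  · exact inf_le_right

lemma pos_le_of_le {x y : A} (h : x ≤ y) (hy : 0 ≤ y) : x⁺ ≤ y := by
  rw [posPart_def]; exact sup_le h hy

lemma posPart_add_smul_one_le {p : A} {c : ℝ} (hc : 0 ≤ c) (h1 : (0:A) ≤ 1) :
    (p + c • (1:A))⁺ ≤ p⁺ + c • 1 := by
  refine pos_le_of_le (add_le_add_left (le_posPart p) _) ?_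
  exact add_nonneg (posPart_nonneg _) (smul_nonneg hc h1)

lemma sub_inf_eq_posPart (c x : A) : c - c ⊓ x = (c - x)⁺ := by
  have h := inf_add_sup c x
  have h2 : (c - x) ⊔ 0 = (c ⊔ x) - x := by
    rw [show (0:A) = x - x by rw [sub_self], ← sup_sub]
  rw [posPart_def, h2]
  have : c ⊔ x = c + x - c ⊓ x := by rw [← h]; abel
  rw [this]; abel



variable (hmulpos : ∀ a b : A, 0 ≤ a → 0 ≤ b → 0 ≤ a * b)
variable (hfalg : ∀ a b c : A, a ⊓ b = 0 → 0 ≤ c → (c * a) ⊓ b = 0)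
variable (harch : ∀ f g : A, (∀ n : ℕ, (n : ℝ) • f ≤ g) → f ≤ 0)

def orderedAux : IsOrderedAddMonoid A :=
  { add_le_add_left := fun a b h c => by
      rw [add_comm a c, add_comm b c]; exact CovariantClass.elim c h }

attribute [local instance] orderedAux

include hmulpos hfalg harch

lemma pos_le_of_le' {x y : A} (h : x ≤ y) (hy : 0 ≤ y) : x⁺ ≤ y := by
  rw [posPart_def]; exact sup_le h hy

lemma mul_mono {c x y : A} (hc : 0 ≤ c) (hxy : x ≤ y) : c * x ≤ c * y := by
  have h := hmulpos c (y - x) hc (by rwa [sub_nonneg])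
  have h2 : c * x + 0 ≤ c * x + c * (y - x) := add_le_add_right h _
  calc c * x = c * x + 0 := (add_zero _).symm
    _ ≤ c * x + c * (y - x) := h2
    _ = c * y := by ring

lemma disj_mul {x y : A} (h : x ⊓ y = 0) : x * y = 0 := by
  have hx : 0 ≤ x := by rw [← h]; exact inf_le_left
  have hy : 0 ≤ y := by rw [← h]; exact inf_le_right
  have h1 : (y * x) ⊓ y = 0 := hfalg x y y h hy
  have h2 : y ⊓ (x * y) = 0 := by rwa [mul_comm, inf_comm] at h1
  have h3 : (x * y) ⊓ (x * y) = 0 := hfalg y (x * y) x h2 hx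
  simpa using h3

lemma sq_nn (x : A) : 0 ≤ x * x := by
  have hd : (x⁺) * (x⁻) = 0 := disj_mul hmulpos hfalg harch (posPart_inf_negPart_eq_zero x)
  have hx : x = x⁺ - x⁻ := (posPart_sub_negPart x).symm
  have h : x * x = x⁺ * x⁺ + x⁻ * x⁻ := by
    calc x * x = (x⁺ - x⁻) * (x⁺ - x⁻) := by rw [← hx]
      _ = x⁺ * x⁺ + x⁻ * x⁻ - 2 * (x⁺ * x⁻) := by ring
      _ = x⁺ * x⁺ + x⁻ * x⁻ := by rw [hd]; ring
  rw [h]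
  exact add_nonneg (hmulpos _ _ (posPart_nonneg x) (posPart_nonneg x))
    (hmulpos _ _ (negPart_nonneg x) (negPart_nonneg x))

lemma one_nn : (0 : A) ≤ 1 := by simpa using sq_nn hmulpos hfalg harch (1 : A)

lemma pow_nn {x : A} (hx : 0 ≤ x) (n : ℕ) : 0 ≤ x ^ n := by
  induction n with
  | zero => simpa using one_nn hmulpos hfalg harch
  | succ n ih => rw [pow_succ]; exact hmulpos _ _ ih hx

lemma pow_mono {x y : A} (hx : 0 ≤ x) (hxy : x ≤ y) (n : ℕ) : x ^ n ≤ y ^ n := by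
  induction n with
  | zero => rw [pow_zero, pow_zero]
  | succ n ih =>
    calc x ^ (n + 1) = x ^ n * x := pow_succ x n
      _ ≤ x ^ n * y := mul_mono hmulpos hfalg harch (pow_nn hmulpos hfalg harch hx n) hxy
      _ = y * x ^ n := mul_comm _ _
      _ ≤ y * y ^ n := mul_mono hmulpos hfalg harch (hx.trans hxy) ih
      _ = y ^ (n + 1) := by rw [mul_comm, pow_succ]

lemma semiprime {x : A} (hx : 0 ≤ x) (hx2 : x * x = 0) : x = 0 := by
  have h1 : (0 : A) ≤ 1 := one_nn hmulpos hfalg harch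
  have key : ∀ n : ℕ, (n : ℝ) • x ≤ 1 := by
    intro n
    set y := (n : ℝ) • x with hy
    have hy0 : 0 ≤ y := smul_nonneg (Nat.cast_nonneg n) hx
    have hyy : y * y = 0 := by
      rw [hy, smul_mul_assoc, mul_smul_comm, hx2, smul_zero, smul_zero]
    set p := (y - 1)⁺ with hp
    have hp0 : 0 ≤ p := posPart_nonneg _
    have hpy : p ≤ y := by
      rw [hp, posPart_def]
      exact sup_le (sub_le_self y h1) hy0
    have hpy0 : p * y = 0 := by
      refine le_antisymm ?_ (hmulpos _ _ hp0 hy0)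
      calc p * y = y * p := mul_comm _ _
        _ ≤ y * y := mul_mono hmulpos hfalg harch hy0 hpy
        _ = 0 := hyy
    have hneg : p * (y - 1)⁻ = 0 := disj_mul hmulpos hfalg harch (posPart_inf_negPart_eq_zero (y - 1))
    have hps : (y - 1)⁺ - (y - 1)⁻ = y - 1 := posPart_sub_negPart (y - 1)
    have hid : p = -(p * p) := by
      have h2 : p * (y - 1) = p * p := by
        calc p * (y - 1) = p * ((y - 1)⁺ - (y - 1)⁻) := by rw [hps]
          _ = p * p - p * (y - 1)⁻ := by rw [← hp]; ring
          _ = p * p := by rw [hneg, sub_zero]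
      have h3 : p * y - p * 1 = p * p := by rw [← h2]; ring
      calc p = p * 1 := (mul_one p).symm
        _ = p * y - (p * y - p * 1) := by ring
        _ = -(p * p) := by rw [h3, hpy0]; ring
    have hple : p ≤ 0 := by
      rw [hid]
      simpa using neg_nonpos_of_nonneg (sq_nn hmulpos hfalg harch p)
    have hpz : p = 0 := le_antisymm hple hp0
    have : y - 1 ≤ 0 := by rw [← hpz]; exact le_posPart _
    exact sub_nonpos.mp this
  have := harch x 1 key
  exact le_antisymm this hx

lemma nilpotent {x : A} (hx : 0 ≤ x) : ∀ n : ℕ, 1 ≤ n → x ^ n = 0 → x = 0 := by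
  intro n
  induction n using Nat.strong_induction_on with
  | _ n ih =>
    intro hn hxn
    rcases Nat.lt_or_ge n 2 with h2 | h2
    · interval_cases n
      · simpa using hxn
    · set j := (n + 1) / 2 with hj
      have hj1 : 1 ≤ j := by omega
      have hjlt : j < n := by omega
      have h2j : n ≤ j + j := by omega
      have hpow : x ^ j * x ^ j = 0 := by
        rw [← pow_add]
        have : j + j = n + (j + j - n) := by omega
        rw [this, pow_add, hxn, zero_mul]
      have := semiprime hmulpos hfalg harch (pow_nn hmulpos hfalg harch hx j) hpow
      exact ih j hjlt hj1 this

lemma root_le {x y : A} (hx : 0 ≤ x) (hy : 0 ≤ y) {N : ℕ} (hN : 1 ≤ N)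
    (hxy : x ^ N = y ^ N) : x ≤ y := by
  set d := (x - y)⁺ with hd
  have hd0 : 0 ≤ d := posPart_nonneg _
  have hdx : d ≤ x := by
    rw [hd, posPart_def]
    exact sup_le (sub_le_self x hy) hx
  have hdd : d * (x - y) = d * d := by
    have h1 : d * (x - y)⁻ = 0 := disj_mul hmulpos hfalg harch (posPart_inf_negPart_eq_zero (x - y))
    calc d * (x - y) = d * ((x - y)⁺ - (x - y)⁻) := by rw [posPart_sub_negPart]
      _ = d * d - d * (x - y)⁻ := by rw [← hd]; ring
      _ = d * d := by rw [h1, sub_zero]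
  set S := ∑ i ∈ Finset.range N, x ^ i * y ^ (N - 1 - i) with hS
  have hterm_nn : ∀ i ∈ Finset.range N, 0 ≤ x ^ i * y ^ (N - 1 - i) := fun i _ =>
    hmulpos _ _ (pow_nn hmulpos hfalg harch hx i) (pow_nn hmulpos hfalg harch hy _)
  have hterm : x ^ (N - 1) ≤ S := by
    have hmem : N - 1 ∈ Finset.range N := Finset.mem_range.2 (by omega)
    have := Finset.single_le_sum (f := fun i => x ^ i * y ^ (N - 1 - i)) hterm_nn hmem
    simpa using this
  have hzero : S * (x - y) = 0 := by rw [hS, geom_sum₂_mul, hxy, sub_self]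
  have hkey : d * d * S = 0 := by
    calc d * d * S = d * (x - y) * S := by rw [hdd]
      _ = d * (S * (x - y)) := by ring
      _ = 0 := by rw [hzero, mul_zero]
  have hpow : d ^ (N + 1) = 0 := by
    have h1 : d ^ (N + 1) = d * d * d ^ (N - 1) := by
      have : N + 1 = 2 + (N - 1) := by omega
      rw [this, pow_add]; ring
    have h2 : d * d * d ^ (N - 1) ≤ d * d * S := by
      refine mul_mono hmulpos hfalg harch (hmulpos _ _ hd0 hd0) ?_
      exact le_trans (pow_mono hmulpos hfalg harch hd0 hdx (N - 1)) hterm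
    have h3 : 0 ≤ d ^ (N + 1) := pow_nn hmulpos hfalg harch hd0 _
    refine le_antisymm ?_ h3
    rw [h1]
    calc d * d * d ^ (N - 1) ≤ d * d * S := h2
      _ = 0 := hkey
  have hdz : d = 0 := nilpotent hmulpos hfalg harch hd0 (N + 1) (by omega) hpow
  have : x - y ≤ 0 := by rw [← hdz]; exact le_posPart _
  exact sub_nonpos.mp this

lemma root_unique {x y : A} (hx : 0 ≤ x) (hy : 0 ≤ y) {N : ℕ} (hN : 1 ≤ N)
    (hxy : x ^ N = y ^ N) : x = y :=
  le_antisymm (root_le hmulpos hfalg harch hx hy hN hxy)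
    (root_le hmulpos hfalg harch hy hx hN hxy.symm)

lemma tail_le {z : A} (hz : 0 ≤ z) {T : ℝ} (hT : 0 < T) :
    (z - T • (1 : A))⁺ ≤ T⁻¹ • (z * z) := by
  have h1 : (0 : A) ≤ 1 := one_nn hmulpos hfalg harch
  have hzz : 0 ≤ z * z := hmulpos _ _ hz hz
  refine pos_le_of_le' hmulpos hfalg harch ?_ (smul_nonneg (by positivity) hzz)
  have hsq : 0 ≤ (z - T • 1) * (z - T • 1) := sq_nn hmulpos hfalg harch _
  have he1 : (T • (1 : A)) * z = T • z := by rw [smul_mul_assoc, one_mul]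
  have he2 : (T • (1 : A)) * (T • (1 : A)) = (T * T) • (1 : A) := by
    rw [smul_mul_assoc, one_mul, smul_smul]
  have hexp : (z - T • 1) * (z - T • 1) = z * z - T • z - T • z + (T * T) • 1 := by
    calc (z - T • 1) * (z - T • 1)
        = z * z - (T • (1:A)) * z - (T • (1:A)) * z + (T • (1:A)) * (T • (1:A)) := by ring
      _ = z * z - T • z - T • z + (T * T) • 1 := by rw [he1, he2]
  have h4 : T⁻¹ • (z * z) - (z - T • 1) = T⁻¹ • ((z - T • 1) * (z - T • 1)) + z := by
    rw [hexp]
    match_scalars <;> field_simp <;> ring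
  have h5 : 0 ≤ T⁻¹ • (z * z) - (z - T • 1) := by
    rw [h4]
    exact add_nonneg (smul_nonneg (by positivity) hsq) hz
  exact sub_nonneg.mp h5






omit hmulpos hfalg harch in
lemma chain {x g : A} {P Q : ℕ → A} (hg : 0 ≤ g) (K : ℕ) (hK : 1 ≤ K)
    (hP : ∀ k, 1 ≤ k → k ≤ K → 0 ≤ P k)
    (hQ : ∀ k, 1 ≤ k → k ≤ K → 0 ≤ Q k)
    (hx : ∀ k, 1 ≤ k → k ≤ K → x ≤ P k + Q k)
    (hdisj : ∀ k, 1 ≤ k → k ≤ K → P k ⊓ Q k = 0)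
    (hQ1 : Q 1 ≤ g)
    (hstep : ∀ k, 1 ≤ k → k + 1 ≤ K → Q (k + 1) ≤ Q k + g) :
    x ≤ g + P K := by
  induction K, hK using Nat.le_induction with
  | base =>
    calc x ≤ P 1 + Q 1 := hx 1 le_rfl le_rfl
      _ ≤ P 1 + g := add_le_add_right hQ1 _
      _ = g + P 1 := add_comm _ _
  | succ K hK1 ih =>
    have hxK : x ≤ g + P K := by
      refine ih (fun k h1 h2 => hP k h1 (h2.trans (Nat.le_succ K)))
        (fun k h1 h2 => hQ k h1 (h2.trans (Nat.le_succ K)))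
        (fun k h1 h2 => hx k h1 (h2.trans (Nat.le_succ K)))
        (fun k h1 h2 => hdisj k h1 (h2.trans (Nat.le_succ K)))
        (fun k h1 h2 => hstep k h1 (h2.trans (Nat.le_succ K)))
    have h1 : x ≤ P (K + 1) + Q (K + 1) := hx _ (by omega) le_rfl
    have h2 : Q (K + 1) ≤ Q K + g := hstep K hK1 le_rfl
    have h3 : x ≤ g + (P (K + 1) + Q K) := by
      calc x ≤ P (K + 1) + Q (K + 1) := h1
        _ ≤ P (K + 1) + (Q K + g) := add_le_add_right h2 _
        _ = g + (P (K + 1) + Q K) := by ring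
    have h4 : x ≤ g + (P K ⊓ (P (K + 1) + Q K)) := by
      have := le_inf hxK h3
      rwa [← add_inf] at this
    have h5 : P K ⊓ (P (K + 1) + Q K) ≤ P (K + 1) := by
      calc P K ⊓ (P (K + 1) + Q K) ≤ P K ⊓ P (K + 1) + P K ⊓ Q K :=
            inf_add_le₃ (hP K hK1 (Nat.le_succ K)) (hP (K + 1) (by omega) le_rfl)
              (hQ K hK1 (Nat.le_succ K))
        _ = P K ⊓ P (K + 1) := by rw [hdisj K hK1 (Nat.le_succ K), add_zero]
        _ ≤ P (K + 1) := inf_le_right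
    exact h4.trans (add_le_add_right h5 _)

omit hmulpos hfalg in
lemma arch_le {x w : A} (hw : 0 ≤ w) (h : ∀ n : ℕ, 1 ≤ n → x ≤ ((n : ℝ))⁻¹ • w) : x ≤ 0 := by
  apply harch x w
  intro n
  match n with
  | 0 => simpa using hw
  | (n + 1) =>
    have hn : (0 : ℝ) < ((n : ℝ) + 1) := by positivity
    have h1 := smul_le_smul_of_nonneg_left (h (n + 1) (by omega)) hn.le
    rw [smul_smul] at h1
    have hne : ((n : ℝ) + 1) ≠ 0 := by positivity
    push_cast at h1
    rw [mul_inv_cancel₀ hne, one_smul] at h1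
    push_cast
    exact h1

lemma master {y z : A} (hy : 0 ≤ y) (hz : 0 ≤ z) {N : ℕ} (hN : 1 ≤ N)
    (hdisj : ∀ u : ℝ, 0 < u → (y - (u ^ N) • (1 : A))⁺ ⊓ ((u ^ N) • (1 : A) - z)⁺ = 0) :
    y ≤ z := by
  have h1A : (0 : A) ≤ 1 := one_nn hmulpos hfalg harch
  have hyy : 0 ≤ y * y := hmulpos _ _ hy hy
  have hw : 0 ≤ (N : ℝ) • (1 : A) + y * y :=
    add_nonneg (smul_nonneg (by positivity) h1A) hyy
  have key : ∀ n : ℕ, 1 ≤ n → y - z ≤ ((n : ℝ))⁻¹ • ((N : ℝ) • (1 : A) + y * y) := by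
    intro n hn
    have hn0 : (0 : ℝ) < (n : ℝ) := by exact_mod_cast Nat.pos_of_ne_zero (by omega)
    have hn1 : (1 : ℝ) ≤ (n : ℝ) := by exact_mod_cast hn
    set δ : ℝ := ((n : ℝ) ^ N)⁻¹ with hδdef
    have hδ0 : (0 : ℝ) < δ := by positivity
    set K : ℕ := n ^ (N + 1) with hKdef
    have hK1 : 1 ≤ K := Nat.one_le_pow _ _ (by omega)
    have huK : ((K : ℝ)) * δ = (n : ℝ) := by
      rw [hKdef, hδdef]
      push_cast
      rw [pow_succ]
      field_simp
    have hu_pos : ∀ k : ℕ, 1 ≤ k → (0 : ℝ) < (k : ℝ) * δ := by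
      intro k hk
      have : (0 : ℝ) < (k : ℝ) := by exact_mod_cast Nat.pos_of_ne_zero (by omega)
      exact mul_pos this hδ0
    have hu_le : ∀ k : ℕ, k ≤ K → (k : ℝ) * δ ≤ (n : ℝ) := by
      intro k hk
      rw [← huK]
      exact mul_le_mul_of_nonneg_right (by exact_mod_cast hk) hδ0.le
    have hγnn : (0 : ℝ) ≤ (N : ℝ) / (n : ℝ) := by positivity
    have hchain : y - z ≤ ((N : ℝ) / (n : ℝ)) • (1 : A) +
        (y - (((K : ℝ) * δ) ^ N) • (1 : A))⁺ := by
      refine chain (smul_nonneg hγnn h1A) K hK1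
        (P := fun k => (y - (((k : ℝ) * δ) ^ N) • (1 : A))⁺)
        (Q := fun k => ((((k : ℝ) * δ) ^ N) • (1 : A) - z)⁺)
        (fun k _ _ => posPart_nonneg _) (fun k _ _ => posPart_nonneg _) ?_ ?_ ?_ ?_
      · intro k hk1 hkK
        have hsplit : y - z = (y - (((k : ℝ) * δ) ^ N) • (1 : A)) +
            ((((k : ℝ) * δ) ^ N) • (1 : A) - z) := by abel
        rw [hsplit]
        exact add_le_add (le_posPart _) (le_posPart _)
      · intro k hk1 hkK
        exact hdisj ((k : ℝ) * δ) (hu_pos k hk1)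
      · have hδ1 : δ ≤ 1 := by
          rw [hδdef]
          refine inv_le_one_of_one_le₀ ?_
          exact one_le_pow₀ hn1
        have hδN : δ ^ N ≤ (N : ℝ) / (n : ℝ) := by
          have e1 : δ ^ N ≤ δ := by
            calc δ ^ N ≤ δ ^ 1 := pow_le_pow_of_le_one hδ0.le hδ1 hN
              _ = δ := pow_one δ
          have e2 : δ ≤ (n : ℝ)⁻¹ := by
            rw [hδdef]
            refine inv_anti₀ hn0 ?_
            calc (n : ℝ) = (n : ℝ) ^ 1 := (pow_one _).symm
              _ ≤ (n : ℝ) ^ N := pow_le_pow_right₀ hn1 hN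
          have e3 : (n : ℝ)⁻¹ ≤ (N : ℝ) / (n : ℝ) := by
            rw [div_eq_mul_inv]
            have hN1 : (1 : ℝ) ≤ (N : ℝ) := by exact_mod_cast hN
            nlinarith [inv_nonneg.2 hn0.le]
          linarith
        calc ((((1 : ℕ) : ℝ) * δ) ^ N • (1 : A) - z)⁺ ≤ ((((1 : ℕ) : ℝ) * δ) ^ N) • (1 : A) := by
              refine pos_le_of_le (sub_le_self _ hz) (smul_nonneg (by positivity) h1A)
          _ ≤ ((N : ℝ) / (n : ℝ)) • (1 : A) := by
              refine coeff_mono _ ?_ h1A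
              calc (((1 : ℕ) : ℝ) * δ) ^ N = δ ^ N := by norm_num
                _ ≤ (N : ℝ) / (n : ℝ) := hδN
      · intro k hk1 hkK
        have hs0 : (0 : ℝ) ≤ (k : ℝ) * δ := (hu_pos k hk1).le
        have hst : (k : ℝ) * δ ≤ ((k + 1 : ℕ) : ℝ) * δ := by
          push_cast
          nlinarith [hδ0.le]
        have htT : ((k + 1 : ℕ) : ℝ) * δ ≤ (n : ℝ) := hu_le (k + 1) hkK
        have hdiff := pow_diff_le N hs0 hst htT
        have hdelta : ((k + 1 : ℕ) : ℝ) * δ - (k : ℝ) * δ = δ := by push_cast; ring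
        rw [hdelta] at hdiff
        have hbound : (N : ℝ) * (n : ℝ) ^ (N - 1) * δ = (N : ℝ) / (n : ℝ) := by
          rw [hδdef]
          have hnN : (n : ℝ) ^ N = (n : ℝ) ^ (N - 1) * (n : ℝ) := by
            rw [← pow_succ]
            congr 1
            omega
          rw [hnN]
          field_simp
        have hc : (0 : ℝ) ≤ (((k + 1 : ℕ) : ℝ) * δ) ^ N - ((k : ℝ) * δ) ^ N := by
          have := pow_le_pow_left₀ hs0 hst N
          linarith
        have hsplit : ((((k + 1 : ℕ) : ℝ) * δ) ^ N) • (1 : A) - z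
            = ((((k : ℝ) * δ) ^ N) • (1 : A) - z) +
              ((((k + 1 : ℕ) : ℝ) * δ) ^ N - ((k : ℝ) * δ) ^ N) • (1 : A) := by
          rw [sub_smul]
          abel
        calc ((((k + 1 : ℕ) : ℝ) * δ) ^ N • (1 : A) - z)⁺
            ≤ ((((k : ℝ) * δ) ^ N) • (1 : A) - z)⁺ +
              ((((k + 1 : ℕ) : ℝ) * δ) ^ N - ((k : ℝ) * δ) ^ N) • (1 : A) := by
              rw [hsplit]
              exact posPart_add_smul_one_le hc h1A
          _ ≤ ((((k : ℝ) * δ) ^ N) • (1 : A) - z)⁺ + ((N : ℝ) / (n : ℝ)) • (1 : A) := by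
              refine add_le_add_right ?_ _
              refine coeff_mono _ ?_ h1A
              calc (((k + 1 : ℕ) : ℝ) * δ) ^ N - ((k : ℝ) * δ) ^ N
                  ≤ (N : ℝ) * (n : ℝ) ^ (N - 1) * δ := hdiff
                _ = (N : ℝ) / (n : ℝ) := hbound
    have htail : (y - (((K : ℝ) * δ) ^ N) • (1 : A))⁺ ≤ ((n : ℝ))⁻¹ • (y * y) := by
      have h2 := tail_le hmulpos hfalg harch hy (T := ((n : ℝ)) ^ N) (by positivity)
      have h1 : ((((K : ℝ) * δ) ^ N) • (1 : A) : A) = (((n : ℝ)) ^ N) • (1 : A) := by rw [huK]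
      rw [h1]
      refine h2.trans ?_
      refine coeff_mono _ ?_ hyy
      have hnn : (n : ℝ) ≤ (n : ℝ) ^ N := by
        calc (n : ℝ) = (n : ℝ) ^ 1 := (pow_one _).symm
          _ ≤ (n : ℝ) ^ N := pow_le_pow_right₀ hn1 hN
      exact inv_anti₀ hn0 hnn
    calc y - z ≤ ((N : ℝ) / (n : ℝ)) • (1 : A) + (y - (((K : ℝ) * δ) ^ N) • (1 : A))⁺ := hchain
      _ ≤ ((N : ℝ) / (n : ℝ)) • (1 : A) + ((n : ℝ))⁻¹ • (y * y) := add_le_add_right htail _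
      _ = ((n : ℝ))⁻¹ • ((N : ℝ) • (1 : A) + y * y) := by
          rw [smul_add, smul_smul]
          have : (N : ℝ) / (n : ℝ) = (n : ℝ)⁻¹ * (N : ℝ) := by
            rw [div_eq_mul_inv, mul_comm]
          rw [this]
  have hfin := arch_le harch hw key
  exact sub_nonpos.mp hfin


omit hmulpos hfalg harch in
lemma rpow_con1 (m : ℕ) {u : ℝ} (hu : 0 < u) :
    ((u ^ m)⁻¹) ^ (1 / ((m : ℝ) + 1)) * u ^ (1 - 1 / ((m : ℝ) + 1)) = 1 := by
  have h1 : ((u ^ m)⁻¹ : ℝ) = u ^ (-(m : ℝ)) := by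
    rw [← Real.rpow_natCast u m, ← Real.rpow_neg hu.le]
  rw [h1, ← Real.rpow_mul hu.le, ← Real.rpow_add hu]
  rw [show -(m : ℝ) * (1 / ((m : ℝ) + 1)) + (1 - 1 / ((m : ℝ) + 1)) = 0 from by
    have hm1 : ((m : ℝ) + 1) ≠ 0 := by positivity
    field_simp
    ring]
  exact Real.rpow_zero u

omit hmulpos hfalg harch in
lemma rpow_con2 (m : ℕ) {s v : ℝ} (hs : 0 < s) (hv : 0 < v)
    (h : s ^ (1 / ((m : ℝ) + 1)) * v ^ (1 - 1 / ((m : ℝ) + 1)) = 1) : s = (v ^ m)⁻¹ := by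
  have hm1 : ((m : ℝ) + 1) ≠ 0 := by positivity
  have h2 : (s ^ (1 / ((m : ℝ) + 1)) * v ^ (1 - 1 / ((m : ℝ) + 1))) ^ ((m : ℝ) + 1) = 1 := by
    rw [h]; exact Real.one_rpow _
  rw [Real.mul_rpow (by positivity) (by positivity), ← Real.rpow_mul hs.le,
    ← Real.rpow_mul hv.le] at h2
  rw [show (1 / ((m : ℝ) + 1)) * ((m : ℝ) + 1) = 1 from by field_simp,
    show (1 - 1 / ((m : ℝ) + 1)) * ((m : ℝ) + 1) = (m : ℝ) from by field_simp; ring,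
    Real.rpow_one, Real.rpow_natCast] at h2
  have hvm : (v ^ m : ℝ) ≠ 0 := by positivity
  field_simp
  linarith [h2]

lemma exists_root
    (hwgm : ∀ (n : ℕ) (f : Fin n → A) (r : Fin n → ℝ),
      (∀ k, 0 < r k ∧ r k < 1) → (∑ k, r k) = 1 → ∃ m, IsGLB (wSet n f r) m)
    {a : A} (ha : 0 ≤ a) (m : ℕ) (hm : 1 ≤ m) :
    ∃ b : A, 0 ≤ b ∧ b ^ (m + 1) = a := by
  have h1A : (0 : A) ≤ 1 := one_nn hmulpos hfalg harch
  have hm1 : (0 : ℝ) < (m : ℝ) + 1 := by positivity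
  have hmR : (1 : ℝ) ≤ (m : ℝ) := by exact_mod_cast hm
  set r : Fin 2 → ℝ := ![1 / ((m : ℝ) + 1), 1 - 1 / ((m : ℝ) + 1)] with hrdef
  have hfrac0 : (0 : ℝ) < 1 / ((m : ℝ) + 1) := by positivity
  have hfrac1 : 1 / ((m : ℝ) + 1) < 1 := by
    rw [div_lt_one hm1]; linarith
  have hr0eq : r 0 = 1 / ((m : ℝ) + 1) := by
    simp [hrdef]
  have hr1eq : r 1 = 1 - 1 / ((m : ℝ) + 1) := by
    simp [hrdef]
  have hr : ∀ k, 0 < r k ∧ r k < 1 := by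
    rw [Fin.forall_fin_two, hr0eq, hr1eq]
    exact ⟨⟨hfrac0, hfrac1⟩, ⟨by linarith, by linarith⟩⟩
  have hrsum : (∑ k, r k) = 1 := by
    rw [Fin.sum_univ_two, hr0eq, hr1eq]
    ring
  obtain ⟨b, hb⟩ := hwgm 2 ![a, 1] r hr hrsum
  have habs_a : |a| = a := abs_of_nonneg ha
  have habs_1 : |(1 : A)| = 1 := abs_of_nonneg h1A
  -- canonical form of members
  have hform : ∀ v : ℝ, 0 < v →
      (r 0 * (v ^ m)⁻¹) • |a| + (r 1 * v) • |(1 : A)| =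
      (1 / (((m : ℝ) + 1) * v ^ m)) • a + (((m : ℝ) / ((m : ℝ) + 1)) * v) • (1 : A) := by
    intro v hv
    rw [habs_a, habs_1]
    have e1 : r 0 * (v ^ m)⁻¹ = 1 / (((m : ℝ) + 1) * v ^ m) := by
      rw [hr0eq, one_div, one_div, mul_inv]
    have e2 : r 1 * v = ((m : ℝ) / ((m : ℝ) + 1)) * v := by
      rw [hr1eq]
      congr 1
      field_simp
      ring
    rw [e1, e2]
  have hmem : ∀ u : ℝ, 0 < u →
      ((1 / (((m : ℝ) + 1) * u ^ m)) • a + (((m : ℝ) / ((m : ℝ) + 1)) * u) • (1 : A))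
        ∈ wSet 2 ![a, 1] r := by
    intro u hu
    refine ⟨![(u ^ m)⁻¹, u], ?_, ?_, ?_⟩
    · rw [Fin.forall_fin_two]
      constructor
      · simp only [Matrix.cons_val_zero]; positivity
      · simp only [Matrix.cons_val_one, Matrix.head_cons]; exact hu
    · rw [Fin.prod_univ_two]
      simp only [hrdef, Matrix.cons_val_zero, Matrix.cons_val_one, Matrix.head_cons]
      exact rpow_con1 m hu
    · rw [Fin.sum_univ_two]
      simp only [Matrix.cons_val_zero, Matrix.cons_val_one, Matrix.head_cons]
      exact (hform u hu).symm
  have hble : ∀ u : ℝ, 0 < u →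
      b ≤ (1 / (((m : ℝ) + 1) * u ^ m)) • a + (((m : ℝ) / ((m : ℝ) + 1)) * u) • (1 : A) :=
    fun u hu => hb.1 (hmem u hu)
  have hb0 : 0 ≤ b := by
    refine hb.2 ?_
    rintro x ⟨θ, hθ, hcon, rfl⟩
    refine Finset.sum_nonneg fun k _ => ?_
    exact smul_nonneg (mul_nonneg (hr k).1.le (hθ k).le) (abs_nonneg _)
  -- the upper inequality (*)
  have hstar : ∀ u : ℝ, 0 < u →
      ((((m : ℝ) + 1) * u ^ m)) • b ≤ a + ((m : ℝ) * u ^ (m + 1)) • (1 : A) := by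
    intro u hu
    have hc : (0 : ℝ) < ((m : ℝ) + 1) * u ^ m := by positivity
    have h := smul_le_smul_of_nonneg_left (hble u hu) hc.le
    rw [smul_add, smul_smul, smul_smul] at h
    have e1 : (((m : ℝ) + 1) * u ^ m) * (1 / (((m : ℝ) + 1) * u ^ m)) = 1 := by
      field_simp
    have e2 : (((m : ℝ) + 1) * u ^ m) * (((m : ℝ) / ((m : ℝ) + 1)) * u) = (m : ℝ) * u ^ (m + 1) := by
      field_simp
      ring
    rwa [e1, e2, one_smul] at h
  -- the lower inequality (**)
  have hss : ∀ u : ℝ, 0 < u → a ⊓ (u ^ (m + 1)) • (1 : A) ≤ (u ^ m) • b := by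
    intro u hu
    set w := a ⊓ (u ^ (m + 1)) • (1 : A) with hwdef
    have hw0 : 0 ≤ w := le_inf ha (smul_nonneg (by positivity) h1A)
    have hwa : w ≤ a := inf_le_left
    have hw1 : w ≤ (u ^ (m + 1)) • (1 : A) := inf_le_right
    have hlb : (u ^ m)⁻¹ • w ∈ lowerBounds (wSet 2 ![a, 1] r) := by
      rintro x ⟨θ, hθ, hcon, rfl⟩
      have hθ1 : 0 < θ 1 := hθ 1
      have hθ0 : 0 < θ 0 := hθ 0
      have hchar : θ 0 = ((θ 1) ^ m)⁻¹ := by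
        refine rpow_con2 m hθ0 hθ1 ?_
        rw [Fin.prod_univ_two, hr0eq, hr1eq] at hcon
        exact hcon
      set v := θ 1 with hvdef
      have hx : (∑ k, (r k * θ k) • |(![a, 1] : Fin 2 → A) k|) =
          (1 / (((m : ℝ) + 1) * v ^ m)) • a + (((m : ℝ) / ((m : ℝ) + 1)) * v) • (1 : A) := by
        rw [Fin.sum_univ_two]
        simp only [Matrix.cons_val_zero, Matrix.cons_val_one, Matrix.head_cons]
        rw [show θ 0 = (v ^ m)⁻¹ from hchar]
        exact hform v hθ1
      rw [hx]
      have step1 : (1 / (((m : ℝ) + 1) * v ^ m)) • w ≤ (1 / (((m : ℝ) + 1) * v ^ m)) • a :=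
        smul_le_smul_of_nonneg_left hwa (by positivity)
      have step2 : ((((m : ℝ) / ((m : ℝ) + 1)) * v) * (u ^ (m + 1))⁻¹) • w ≤
          (((m : ℝ) / ((m : ℝ) + 1)) * v) • (1 : A) := by
        have e3 : (((m : ℝ) / ((m : ℝ) + 1)) * v) • (1 : A) =
            ((((m : ℝ) / ((m : ℝ) + 1)) * v) * (u ^ (m + 1))⁻¹) • ((u ^ (m + 1)) • (1 : A)) := by
          rw [smul_smul, mul_assoc, inv_mul_cancel₀ (show (u ^ (m + 1) : ℝ) ≠ 0 by positivity),
            mul_one]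
        rw [e3]
        exact smul_le_smul_of_nonneg_left hw1 (by positivity)
      have hco : (u ^ m)⁻¹ ≤ 1 / (((m : ℝ) + 1) * v ^ m) +
          (((m : ℝ) / ((m : ℝ) + 1)) * v) * (u ^ (m + 1))⁻¹ := by
        have := amgm_real m hu hθ1
        calc (u ^ m)⁻¹ ≤ 1 / (((m : ℝ) + 1) * v ^ m) +
              ((m : ℝ) / ((m : ℝ) + 1)) * v * (u ^ (m + 1))⁻¹ := this
          _ = _ := by ring
      calc (u ^ m)⁻¹ • w
          ≤ (1 / (((m : ℝ) + 1) * v ^ m) +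
              (((m : ℝ) / ((m : ℝ) + 1)) * v) * (u ^ (m + 1))⁻¹) • w := coeff_mono w hco hw0
        _ = (1 / (((m : ℝ) + 1) * v ^ m)) • w +
              ((((m : ℝ) / ((m : ℝ) + 1)) * v) * (u ^ (m + 1))⁻¹) • w := add_smul _ _ _
        _ ≤ (1 / (((m : ℝ) + 1) * v ^ m)) • a +
              (((m : ℝ) / ((m : ℝ) + 1)) * v) • (1 : A) := add_le_add step1 step2
    have key2 : (u ^ m)⁻¹ • w ≤ b := hb.2 hlb
    have key3 := smul_le_smul_of_nonneg_left key2 (le_of_lt (show (0:ℝ) < u ^ m by positivity))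
    rwa [smul_smul, mul_inv_cancel₀ (by positivity), one_smul] at key3
  -- now the two disjointness families and master
  set N : ℕ := m + 1 with hNdef
  have hN : 1 ≤ N := by omega
  have hbN0 : 0 ≤ b ^ N := pow_nn hmulpos hfalg harch hb0 N
  -- common objects
  have hWfact : ∀ u : ℝ, 0 < u →
      (∑ i ∈ Finset.range N, b ^ i * (u • (1 : A)) ^ (N - 1 - i)) * (b - u • (1 : A)) =
        b ^ N - (u ^ N) • (1 : A) := by
    intro u hu
    rw [geom_sum₂_mul b (u • (1 : A)) N]
    congr 1
    rw [smul_pow, one_pow]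
  have hH0 : ∀ u : ℝ, 0 < u →
      0 ≤ ∑ i ∈ Finset.range N, b ^ i * (u • (1 : A)) ^ (N - 1 - i) := by
    intro u hu
    refine Finset.sum_nonneg fun i _ => hmulpos _ _ (pow_nn hmulpos hfalg harch hb0 i) ?_
    exact pow_nn hmulpos hfalg harch (smul_nonneg hu.le h1A) _
  have hVW : ∀ u : ℝ, (b - u • (1 : A))⁺ ⊓ (u • (1 : A) - b)⁺ = 0 := by
    intro u
    have h := posPart_inf_negPart_eq_zero (b - u • (1 : A))
    have e : (b - u • (1 : A))⁻ = (u • (1 : A) - b)⁺ := by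
      rw [negPart_def, posPart_def, neg_sub]
    rwa [e] at h
  have hdisj1 : ∀ u : ℝ, 0 < u →
      (b ^ N - (u ^ N) • (1 : A))⁺ ⊓ ((u ^ N) • (1 : A) - a)⁺ = 0 := by
    intro u hu
    set H := ∑ i ∈ Finset.range N, b ^ i * (u • (1 : A)) ^ (N - 1 - i) with hHdef
    set V := (b - u • (1 : A))⁺ with hVdef
    set W := (u • (1 : A) - b)⁺ with hWdef
    have hPle : (b ^ N - (u ^ N) • (1 : A))⁺ ≤ H * V := by
      refine pos_le_of_le ?_ (hmulpos _ _ (hH0 u hu) (posPart_nonneg _))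
      rw [← hWfact u hu]
      exact mul_mono hmulpos hfalg harch (hH0 u hu) (le_posPart _)
    have hQle : ((u ^ N) • (1 : A) - a)⁺ ≤ ((((m : ℝ) + 1) * u ^ m)) • W := by
      have h' := hstar u hu
      have e : (((m : ℝ) + 1) * u ^ m) * u = u ^ (m + 1) + (m : ℝ) * u ^ (m + 1) := by ring
      have goal' : (u ^ N) • (1 : A) - a ≤ ((((m : ℝ) + 1) * u ^ m)) • (u • (1 : A) - b) := by
        rw [smul_sub, smul_smul, e, add_smul, hNdef]
        rw [sub_le_sub_iff]
        calc (u ^ (m + 1)) • (1 : A) + ((((m : ℝ) + 1) * u ^ m)) • b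
            ≤ (u ^ (m + 1)) • (1 : A) + (a + ((m : ℝ) * u ^ (m + 1)) • (1 : A)) :=
              add_le_add_right h' _
          _ = (u ^ (m + 1)) • (1 : A) + ((m : ℝ) * u ^ (m + 1)) • (1 : A) + a := by abel
      calc ((u ^ N) • (1 : A) - a)⁺ ≤ (((((m : ℝ) + 1) * u ^ m)) • (u • (1 : A) - b))⁺ :=
            posPart_mono goal'
        _ = ((((m : ℝ) + 1) * u ^ m)) • W := by
            rw [smul_posPart_eq (by positivity)]
    have hd : (H * V) ⊓ (((((m : ℝ) + 1) * u ^ m)) • W) = 0 := by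
      refine inf_zero_smul_right ?_ (by positivity)
      exact hfalg V W H (hVW u) (hH0 u hu)
    refine le_antisymm ?_ (le_inf (posPart_nonneg _) (posPart_nonneg _))
    calc (b ^ N - (u ^ N) • (1 : A))⁺ ⊓ ((u ^ N) • (1 : A) - a)⁺
        ≤ (H * V) ⊓ (((((m : ℝ) + 1) * u ^ m)) • W) := inf_le_inf hPle hQle
      _ = 0 := hd
  have hdisj2 : ∀ u : ℝ, 0 < u →
      (a - (u ^ N) • (1 : A))⁺ ⊓ ((u ^ N) • (1 : A) - b ^ N)⁺ = 0 := by
    intro u hu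
    set H := ∑ i ∈ Finset.range N, b ^ i * (u • (1 : A)) ^ (N - 1 - i) with hHdef
    set W := (u • (1 : A) - b)⁺ with hWdef
    set P := (a - (u ^ N) • (1 : A))⁺ with hPdef
    set J := ((u ^ N) • (1 : A) - a)⁺ with hJdef
    have hPJ : P ⊓ J = 0 := by
      have h := posPart_inf_negPart_eq_zero (a - (u ^ N) • (1 : A))
      have e : (a - (u ^ N) • (1 : A))⁻ = J := by
        rw [hJdef, negPart_def, posPart_def, neg_sub]
      rwa [e] at h
    have h2 : (u ^ N) • (1 : A) - (u ^ m) • b ≤ J := by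
      have h3 := sub_le_sub_left (hss u hu) ((u ^ (m + 1)) • (1 : A))
      have e : (u ^ (m + 1)) • (1 : A) - a ⊓ (u ^ (m + 1)) • (1 : A) =
          ((u ^ (m + 1)) • (1 : A) - a)⁺ := by
        rw [inf_comm]
        exact sub_inf_eq_posPart _ _
      rw [e] at h3
      rw [hJdef, hNdef]
      exact h3
    have h3 : (u ^ m) • W ≤ J := by
      have e : (u ^ m) • W = ((u ^ N) • (1 : A) - (u ^ m) • b)⁺ := by
        rw [hWdef, ← smul_posPart_eq (show (0:ℝ) < u ^ m by positivity), smul_sub, smul_smul,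
          ← pow_succ, ← hNdef]
      rw [e]
      exact pos_le_of_le h2 (posPart_nonneg _)
    have hWP0 : ((u ^ m) • W) ⊓ P = 0 := by
      refine le_antisymm ?_ (le_inf (smul_nonneg (by positivity) (posPart_nonneg _))
        (posPart_nonneg _))
      calc ((u ^ m) • W) ⊓ P ≤ J ⊓ P := inf_le_inf_right P h3
        _ = P ⊓ J := inf_comm _ _
        _ = 0 := hPJ
    have hWP : W ⊓ P = 0 := by
      have h4 := inf_zero_smul_left hWP0 (show (0:ℝ) < (u ^ m)⁻¹ by positivity)
      rwa [smul_smul, inv_mul_cancel₀ (by positivity), one_smul] at h4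
    have hQle : ((u ^ N) • (1 : A) - b ^ N)⁺ ≤ H * W := by
      have h5 : H * (u • (1 : A) - b) = (u ^ N) • (1 : A) - b ^ N := by
        have e : H * (u • (1 : A) - b) = -(H * (b - u • (1 : A))) := by ring
        rw [e, hWfact u hu]
        ring
      refine pos_le_of_le ?_ (hmulpos _ _ (hH0 u hu) (posPart_nonneg _))
      rw [← h5]
      exact mul_mono hmulpos hfalg harch (hH0 u hu) (le_posPart _)
    have hd : (H * W) ⊓ P = 0 := hfalg W P H hWP (hH0 u hu)
    refine le_antisymm ?_ (le_inf (posPart_nonneg _) (posPart_nonneg _))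
    calc P ⊓ ((u ^ N) • (1 : A) - b ^ N)⁺ ≤ P ⊓ (H * W) := inf_le_inf_left P hQle
      _ = (H * W) ⊓ P := inf_comm _ _
      _ = 0 := hd
  have hle1 : b ^ N ≤ a := master hmulpos hfalg harch hbN0 ha hN hdisj1
  have hle2 : a ≤ b ^ N := master hmulpos hfalg harch ha hbN0 hN hdisj2
  exact ⟨b, hb0, le_antisymm hle1 hle2⟩


end Stmt11

/-- **Lemma 4.2, first assertion.** In a weighted geometric mean closed Archimedean
`Φ`-algebra `A`, every `a ∈ A⁺` has a unique nonnegative `N`-th root `a^{1/N}` for each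
`N ≥ 1`; consequently `a^q` exists for every positive rational `q = m/N`. -/
theorem stmt11 {A : Type*} [CommRing A] [Lattice A]
    [CovariantClass A A (· + ·) (· ≤ ·)]
    [Algebra ℝ A] [PosSMulMono ℝ A]
    (harch : ∀ f g : A, (∀ n : ℕ, (n : ℝ) • f ≤ g) → f ≤ 0)
    (hmulpos : ∀ a b : A, 0 ≤ a → 0 ≤ b → 0 ≤ a * b)
    (hfalg : ∀ a b c : A, a ⊓ b = 0 → 0 ≤ c → (c * a) ⊓ b = 0)
    (hwgm : ∀ (n : ℕ) (f : Fin n → A) (r : Fin n → ℝ),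
      (∀ k, 0 < r k ∧ r k < 1) → (∑ k, r k) = 1 → ∃ m, IsGLB (wSet n f r) m) :
    (∀ a : A, 0 ≤ a → ∀ N : ℕ, 1 ≤ N → ∃! b : A, 0 ≤ b ∧ b ^ N = a) ∧
    (∀ a : A, 0 ≤ a → ∀ M N : ℕ, 1 ≤ M → 1 ≤ N →
      ∃! b : A, 0 ≤ b ∧ b ^ N = a ^ M) := by
  have part1 : ∀ a : A, 0 ≤ a → ∀ N : ℕ, 1 ≤ N → ∃! b : A, 0 ≤ b ∧ b ^ N = a := by
    intro a ha N hN
    obtain ⟨m, rfl⟩ : ∃ m, N = m + 1 := ⟨N - 1, by omega⟩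
    rcases Nat.eq_zero_or_pos m with rfl | hmpos
    · refine ⟨a, ⟨ha, pow_one a⟩, ?_⟩
      rintro c ⟨hc0, hc⟩
      simpa using hc
    · obtain ⟨b, hb0, hbpow⟩ := Stmt11.exists_root hmulpos hfalg harch hwgm ha m hmpos
      refine ⟨b, ⟨hb0, hbpow⟩, ?_⟩
      rintro c ⟨hc0, hc⟩
      exact Stmt11.root_unique hmulpos hfalg harch hc0 hb0 (show 1 ≤ m + 1 by omega)
        (hc.trans hbpow.symm)
  refine ⟨part1, ?_⟩
  intro a ha M N hM hN
  exact part1 (a ^ M) (Stmt11.pow_nn hmulpos hfalg harch ha M) N hN
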